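/- There is a universal constant C₀ > 0 such that the following holds. Fix d ∈ ℕ, a finite action set 𝒜 with |𝒜| = A ≥ 1, a measurable space 𝒳, a probability distribution ν on 𝒳, a feature map φ : 𝒳 × 𝒜 → ℝ^d with each φ(·,a) measurable and ‖φ(x,a)‖_∞ ≤ 1 for all (x,a), and an unknown vector θ* ∈ ℝ^d with ‖θ*‖₁ ≤ C for some C ≥ 1. Let ε, δ ∈ (0,1) and let N ≥ C₀ · C⁴ A² ε⁻⁴ log(d/δ). Draw i.i.d. samples (x^i, a^i) for i = 1,…,N with x^i ∼ ν and a^i ∼ Unif(𝒜) independent of x^i, and observe noiseless rewards r^i = ⟨φ(x^i,a^i), θ*⟩. Let θ̂ be any minimizer of Σ_{i=1}^N (⟨φ(x^i,a^i), θ⟩ − r^i)² over {θ ∈ ℝ^d : ‖θ‖₁ ≤ C}, and let π̂ : 𝒳 → 𝒜 be any measurable function with π̂(x) ∈ argmax_{a∈𝒜} ⟨φ(x,a), θ̂⟩ for every x. Then with probability at least 1 − δ over the samples, E_{x∼ν}[ max_{a∈𝒜} ⟨φ(x,a), θ*⟩ − ⟨φ(x,π̂(x)), θ*⟩ ] ≤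 ε. -/

import Mathlib

open MeasureTheory ProbabilityTheory

noncomputable section

/-- The ℓ₁ norm of a vector in `ℝ^d`. -/
def l1norm {d : ℕ} (v : Fin d → ℝ) : ℝ := ∑ i, |v i|

/-- The standard inner product on `ℝ^d`. -/
def ip {d : ℕ} (u v : Fin d → ℝ) : ℝ := ∑ i, u i * v i



private lemma abs_ip_le {d : ℕ} {u v : Fin d → ℝ} (hu : ∀ i, |u i| ≤ 1) :
    |ip u v| ≤ l1norm v := by
  rw [ip, l1norm]
  refine (Finset.abs_sum_le_sum_abs _ _).trans (Finset.sum_le_sum fun i _ => ?_)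
  rw [abs_mul]
  calc |u i| * |v i| ≤ 1 * |v i| := mul_le_mul_of_nonneg_right (hu i) (abs_nonneg _)
    _ = |v i| := one_mul _

private lemma ip_sub {d : ℕ} (u a b : Fin d → ℝ) :
    ip u a - ip u b = ip u (fun i => a i - b i) := by
  simp [ip, mul_sub, Finset.sum_sub_distrib]

private lemma l1_sub_le {d : ℕ} (a b : Fin d → ℝ) :
    l1norm (fun i => a i - b i) ≤ l1norm a + l1norm b := by
  rw [l1norm, l1norm, l1norm, ← Finset.sum_add_distrib]
  exact Finset.sum_le_sum fun i _ => abs_sub (a i) (b i)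

private lemma sq_ip {d : ℕ} (u v : Fin d → ℝ) :
    (ip u v) ^ 2 = ∑ k, ∑ l, (v k * v l) * (u k * u l) := by
  rw [ip, sq, Finset.sum_mul_sum]
  exact Finset.sum_congr rfl fun k _ => Finset.sum_congr rfl fun l _ => by ring

private lemma measurable_ip {d : ℕ} {𝒳 : Type*} [MeasurableSpace 𝒳]
    {f : 𝒳 → Fin d → ℝ} (hf : Measurable f) (v : Fin d → ℝ) :
    Measurable fun x => ip (f x) v := by
  unfold ip
  exact Finset.measurable_sum _ fun i _ => ((measurable_pi_apply i).comp hf).mul_const _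

private lemma abs_le_sq_div {u η : ℝ} (hη : 0 < η) : |u| ≤ (u ^ 2 + η ^ 2) / (2 * η) := by
  rw [le_div_iff₀ (by positivity)]
  nlinarith [sq_nonneg (|u| - η), sq_abs u, abs_nonneg u]

private lemma integrable_of_bdd {Ω : Type*} [MeasurableSpace Ω] {μ : Measure Ω}
    [IsFiniteMeasure μ] {f : Ω → ℝ} (hm : Measurable f) {B : ℝ} (hb : ∀ ω, |f ω| ≤ B) :
    Integrable f μ :=
  (integrable_const B).mono' hm.aestronglyMeasurable
    (Filter.Eventually.of_forall (by simpa [Real.norm_eq_abs] using hb))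

private lemma exp_le_quad {u : ℝ} (hu : |u| ≤ 1) : Real.exp u ≤ 1 + u + u ^ 2 := by
  have h := Real.exp_bound hu (by norm_num : 0 < 2)
  have h2 : ∑ i ∈ Finset.range 2, u ^ i / (Nat.factorial i) = 1 + u := by
    simp [Finset.sum_range_succ]
  rw [h2] at h
  have h3 : |u| ^ 2 = u ^ 2 := sq_abs u
  have h5 : ((Nat.succ 2 : ℕ) : ℝ) / ((Nat.factorial 2 : ℕ) * (2:ℕ)) = 3 / 4 := by
    norm_num [Nat.factorial]
  rw [h3, h5] at h
  have := abs_le.mp h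
  nlinarith [sq_nonneg u]

private lemma mgf_step {Ω : Type*} [MeasurableSpace Ω] {μ : Measure Ω} [IsProbabilityMeasure μ]
    {f : Ω → ℝ} (hm : Measurable f) (hb : ∀ ω, |f ω| ≤ 2) (h0 : ∫ ω, f ω ∂μ = 0)
    {l : ℝ} (hl : 0 ≤ l) (hl2 : l ≤ 1 / 2) :
    ∫ ω, Real.exp (l * f ω) ∂μ ≤ Real.exp (4 * l ^ 2) := by
  have hfi : Integrable f μ := integrable_of_bdd hm hb
  have hpt : ∀ ω, Real.exp (l * f ω) ≤ 1 + l * f ω + 4 * l ^ 2 := by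
    intro ω
    have habs : |l * f ω| ≤ 1 := by
      rw [abs_mul, abs_of_nonneg hl]
      calc l * |f ω| ≤ (1/2) * 2 := by
            apply mul_le_mul hl2 (hb ω) (abs_nonneg _) (by norm_num)
        _ = 1 := by norm_num
    have := exp_le_quad habs
    have hsq : (l * f ω) ^ 2 ≤ 4 * l ^ 2 := by
      have := hb ω
      have h5 : (l * f ω) ^ 2 = l ^ 2 * (f ω) ^ 2 := by ring
      have h6 : (f ω) ^ 2 ≤ 4 := by nlinarith [sq_abs (f ω), abs_nonneg (f ω)]
      nlinarith [sq_nonneg l]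
    linarith
  have hexpi : Integrable (fun ω => Real.exp (l * f ω)) μ := by
    refine integrable_of_bdd (Real.measurable_exp.comp (hm.const_mul l)) (B := Real.exp 1) ?_
    intro ω
    rw [abs_of_pos (Real.exp_pos _)]
    apply Real.exp_le_exp.2
    calc l * f ω ≤ |l * f ω| := le_abs_self _
      _ ≤ 1 := by
        rw [abs_mul, abs_of_nonneg hl]
        calc l * |f ω| ≤ (1/2) * 2 :=
              mul_le_mul hl2 (hb ω) (abs_nonneg _) (by norm_num)
          _ = 1 := by norm_num
  have hrhs : Integrable (fun ω => 1 + l * f ω + 4 * l ^ 2) μ :=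
    ((integrable_const 1).add (hfi.const_mul l)).add (integrable_const _)
  calc ∫ ω, Real.exp (l * f ω) ∂μ ≤ ∫ ω, (1 + l * f ω + 4 * l ^ 2) ∂μ :=
        integral_mono hexpi hrhs hpt
    _ = 1 + 4 * l ^ 2 := by
        have e1 : ∀ ω, 1 + l * f ω + 4 * l ^ 2 = (1 + 4 * l ^ 2) + l * f ω := by
          intro ω; ring
        simp_rw [e1]
        rw [integral_add (integrable_const _) (hfi.const_mul l), MeasureTheory.integral_const_mul, h0,
          integral_const]
        simp
    _ ≤ Real.exp (4 * l ^ 2) := by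
        have := Real.add_one_le_exp (4 * l ^ 2); linarith

private lemma chernoff {Ω : Type*} [MeasurableSpace Ω] (μ : Measure Ω) [IsProbabilityMeasure μ]
    {f : Ω → ℝ} (hm : Measurable f) (hb : ∀ ω, |f ω| ≤ 2) (h0 : ∫ ω, f ω ∂μ = 0)
    (hmgf : ∀ l : ℝ, 0 ≤ l → l ≤ 1 / 2 →
      ∫ ω, Real.exp (l * f ω) ∂μ ≤ Real.exp (4 * l ^ 2))
    (N : ℕ) {t : ℝ} (ht : 0 < t) (ht1 : t ≤ 1) :
    (Measure.pi fun _ : Fin N => μ) {ω : Fin N → Ω | (N : ℝ) * t ≤ ∑ j, f (ω j)} ≤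
      ENNReal.ofReal (Real.exp (-((N : ℝ) * t ^ 2) / 16)) := by
  letI : MeasureSpace Ω := ⟨μ⟩
  have hμvol : (volume : Measure Ω) = μ := rfl
  set l := t / 8 with hldef
  have hl : 0 ≤ l := by positivity
  have hl2 : l ≤ 1 / 2 := by rw [hldef]; linarith
  set X : (Fin N → Ω) → ℝ := fun ω => ∑ j, f (ω j) with hX
  have hprod : ∀ ω : Fin N → Ω, Real.exp (l * X ω) = ∏ j, Real.exp (l * f (ω j)) := by
    intro ω
    rw [hX, Finset.mul_sum, Real.exp_sum]
  have hint_each : Integrable (fun y : Ω => Real.exp (l * f y)) μ := by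
    refine integrable_of_bdd (Real.measurable_exp.comp (hm.const_mul l)) (B := Real.exp 1) ?_
    intro ω
    rw [abs_of_pos (Real.exp_pos _)]
    apply Real.exp_le_exp.2
    calc l * f ω ≤ |l * f ω| := le_abs_self _
      _ ≤ 1 := by
        rw [abs_mul, abs_of_nonneg hl]
        calc l * |f ω| ≤ (1 / 2) * 2 :=
              mul_le_mul hl2 (hb ω) (abs_nonneg _) (by norm_num)
          _ = 1 := by norm_num
  have hpieq : (Measure.pi fun _ : Fin N => μ) = (volume : Measure (Fin N → Ω)) := by
    rw [MeasureTheory.volume_pi, hμvol]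
  have h_int : Integrable (fun ω : Fin N → Ω => Real.exp (l * X ω))
      (Measure.pi fun _ : Fin N => μ) := by
    rw [hpieq]
    have : (fun ω : Fin N → Ω => Real.exp (l * X ω)) =
        fun ω : Fin N → Ω => ∏ j, (fun y => Real.exp (l * f y)) (ω j) := by
      funext ω; exact hprod ω
    rw [this]
    exact Integrable.fintype_prod (𝕜 := ℝ) fun _ => hint_each
  have hchern := measure_ge_le_exp_mul_mgf (μ := Measure.pi fun _ : Fin N => μ)
    (X := X) ((N : ℝ) * t) hl h_int
  have hmgfeq : mgf X (Measure.pi fun _ : Fin N => μ) l =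
      (∫ y : Ω, Real.exp (l * f y) ∂μ) ^ N := by
    rw [mgf]
    simp_rw [hprod]
    rw [hpieq]
    rw [← hpieq, MeasureTheory.integral_fintype_prod_eq_pow (ι := Fin N) (fun y => Real.exp (l * f y))]
    simp [hμvol]
  have hmono : mgf X (Measure.pi fun _ : Fin N => μ) l ≤ Real.exp (4 * l ^ 2) ^ N := by
    rw [hmgfeq]
    exact pow_le_pow_left₀ (integral_nonneg fun ω => (Real.exp_pos _).le)
      (hmgf l hl hl2) N
  have hnum : Real.exp (-l * ((N : ℝ) * t)) * Real.exp (4 * l ^ 2) ^ N =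
      Real.exp (-((N : ℝ) * t ^ 2) / 16) := by
    rw [← Real.exp_nat_mul, ← Real.exp_add]
    congr 1
    rw [hldef]
    ring
  have hfin : (Measure.pi fun _ : Fin N => μ) {ω : Fin N → Ω | (N : ℝ) * t ≤ X ω} ≠ ⊤ :=
    measure_ne_top _ _
  have : ((Measure.pi fun _ : Fin N => μ) {ω : Fin N → Ω | (N : ℝ) * t ≤ X ω}).toReal ≤
      Real.exp (-((N : ℝ) * t ^ 2) / 16) := by
    calc _ ≤ Real.exp (-l * ((N : ℝ) * t)) * mgf X (Measure.pi fun _ : Fin N => μ) l := hchern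
      _ ≤ Real.exp (-l * ((N : ℝ) * t)) * Real.exp (4 * l ^ 2) ^ N := by
          apply mul_le_mul_of_nonneg_left hmono (Real.exp_pos _).le
      _ = _ := hnum
  calc (Measure.pi fun _ : Fin N => μ) {ω : Fin N → Ω | (N : ℝ) * t ≤ ∑ j, f (ω j)} =
        ENNReal.ofReal (((Measure.pi fun _ : Fin N => μ)
          {ω : Fin N → Ω | (N : ℝ) * t ≤ X ω}).toReal) := (ENNReal.ofReal_toReal hfin).symm
    _ ≤ ENNReal.ofReal (Real.exp (-((N : ℝ) * t ^ 2) / 16)) := ENNReal.ofReal_le_ofReal this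

private lemma integral_prod_pmf {𝒳 𝒜 : Type*} [MeasurableSpace 𝒳] [MeasurableSpace 𝒜]
    [Fintype 𝒜] [Nonempty 𝒜] [MeasurableSingletonClass 𝒜]
    (ν : Measure 𝒳) [IsProbabilityMeasure ν] {f : 𝒳 × 𝒜 → ℝ} (hm : Measurable f)
    {B : ℝ} (hb : ∀ p, |f p| ≤ B) :
    ∫ p, f p ∂(ν.prod (PMF.uniformOfFintype 𝒜).toMeasure) =
      ((Fintype.card 𝒜 : ℝ))⁻¹ * ∑ a, ∫ x, f (x, a) ∂ν := by
  have hfi : Integrable f (ν.prod (PMF.uniformOfFintype 𝒜).toMeasure) :=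
    integrable_of_bdd hm hb
  rw [MeasureTheory.integral_prod _ hfi]
  have hinner : ∀ x : 𝒳, ∫ a, f (x, a) ∂(PMF.uniformOfFintype 𝒜).toMeasure =
      ∑ a, ((Fintype.card 𝒜 : ℝ))⁻¹ * f (x, a) := by
    intro x
    rw [integral_fintype (integrable_of_bdd (measurable_of_countable _) (fun a => hb (x, a)))]
    refine Finset.sum_congr rfl fun a _ => ?_
    rw [measureReal_def, PMF.toMeasure_apply_singleton _ _ (measurableSet_singleton a),
      PMF.uniformOfFintype_apply]
    simp [smul_eq_mul, ENNReal.toReal_inv]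
  simp_rw [hinner]
  rw [integral_finset_sum]
  · rw [Finset.mul_sum]
    refine Finset.sum_congr rfl fun a _ => ?_
    rw [MeasureTheory.integral_const_mul]
  · intro a _
    refine Integrable.const_mul ?_ _
    refine integrable_of_bdd (hm.comp (measurable_id.prodMk measurable_const)) fun x => hb _


private lemma compl_bound {Ω : Type*} [MeasurableSpace Ω] {μ : Measure Ω}
    [IsProbabilityMeasure μ] {B E : Set Ω} {δ : ℝ} (hδ : 0 ≤ δ)
    (hB : μ B ≤ ENNReal.ofReal δ) (hsub : Bᶜ ⊆ E) :
    ENNReal.ofReal (1 - δ) ≤ μ E := by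
  have h1 : (1 : ENNReal) ≤ μ B + μ Bᶜ := by
    rw [← measure_univ (μ := μ), ← Set.union_compl_self B]
    exact measure_union_le _ _
  calc ENNReal.ofReal (1 - δ) = ENNReal.ofReal 1 - ENNReal.ofReal δ := ENNReal.ofReal_sub _ hδ
    _ ≤ μ Bᶜ := by
        rw [ENNReal.ofReal_one]
        refine tsub_le_iff_right.mpr (h1.trans ?_)
        rw [add_comm]
        exact add_le_add le_rfl hB
    _ ≤ μ E := measure_mono hsub

private lemma subopt_of_E {d : ℕ} {𝒜 : Type*} [Fintype 𝒜] [Nonempty 𝒜] [MeasurableSpace 𝒜]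
    [MeasurableSingletonClass 𝒜] {𝒳 : Type*} [MeasurableSpace 𝒳]
    (ν : Measure 𝒳) [IsProbabilityMeasure ν] (φ : 𝒳 × 𝒜 → Fin d → ℝ)
    (hφm : ∀ a : 𝒜, Measurable fun x : 𝒳 => φ (x, a))
    (hφb : ∀ (x : 𝒳) (a : 𝒜) (i : Fin d), |φ (x, a) i| ≤ 1)
    (θstar θhat : Fin d → ℝ) {ε : ℝ} (hε : 0 < ε)
    (πhat : 𝒳 → 𝒜)
    (hgr : ∀ (x : 𝒳) (a : 𝒜), ip (φ (x, a)) θhat ≤ ip (φ (x, πhat x)) θhat)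
    (hE : ∫ p, (ip (φ p) (fun i => θhat i - θstar i)) ^ 2
        ∂(ν.prod (PMF.uniformOfFintype 𝒜).toMeasure) ≤
        ε ^ 2 / (4 * (Fintype.card 𝒜 : ℝ))) :
    (∫ x, ((⨆ a : 𝒜, ip (φ (x, a)) θstar) - ip (φ (x, πhat x)) θstar) ∂ν) ≤ ε := by
  set A := (Fintype.card 𝒜 : ℝ) with hAdef
  have hA1 : 1 ≤ A := by rw [hAdef]; exact_mod_cast Fintype.card_pos
  have hA0 : 0 < A := lt_of_lt_of_le one_pos hA1
  set Δ : Fin d → ℝ := fun i => θhat i - θstar i with hΔdef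
  set η : ℝ := ε / 2 with hηdef
  have hη : 0 < η := by rw [hηdef]; linarith
  set S : 𝒳 → ℝ := fun x => ∑ a, (ip (φ (x, a)) Δ) ^ 2 with hSdef
  set D : ℝ := l1norm Δ with hDdef
  have hD0 : 0 ≤ D := by
    rw [hDdef, l1norm]; exact Finset.sum_nonneg fun i _ => abs_nonneg _
  have hipb : ∀ (x : 𝒳) (a : 𝒜), (ip (φ (x, a)) Δ) ^ 2 ≤ D ^ 2 := by
    intro x a
    rw [← sq_abs (ip (φ (x, a)) Δ)]
    exact pow_le_pow_left₀ (abs_nonneg _) (abs_ip_le fun i => hφb x a i) 2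
  have hS0 : ∀ x, 0 ≤ S x := fun x => Finset.sum_nonneg fun a _ => sq_nonneg _
  have hSb : ∀ x, |S x| ≤ A * D ^ 2 := by
    intro x
    rw [abs_of_nonneg (hS0 x), hSdef]
    calc ∑ a, (ip (φ (x, a)) Δ) ^ 2 ≤ ∑ _a : 𝒜, D ^ 2 :=
          Finset.sum_le_sum fun a _ => hipb x a
      _ = A * D ^ 2 := by rw [Finset.sum_const, hAdef]; simp [mul_comm]
  have hSm : Measurable S := by
    rw [hSdef]
    exact Finset.measurable_sum _ fun a _ => (measurable_ip (hφm a) Δ).pow_const 2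
  -- pointwise bound
  have hFle : ∀ x, ((⨆ a : 𝒜, ip (φ (x, a)) θstar) - ip (φ (x, πhat x)) θstar) ≤
      S x / η + η := by
    intro x
    rw [sub_le_iff_le_add]
    refine ciSup_le fun a => ?_
    have eπ : ip (φ (x, πhat x)) θhat - ip (φ (x, πhat x)) θstar = ip (φ (x, πhat x)) Δ := by
      rw [hΔdef]; exact ip_sub _ _ _
    have ea : ip (φ (x, a)) θhat - ip (φ (x, a)) θstar = ip (φ (x, a)) Δ := by
      rw [hΔdef]; exact ip_sub _ _ _
    have g1 := hgr x a
    have g2 := abs_le_sq_div (u := ip (φ (x, πhat x)) Δ) hη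
    have g3 := abs_le_sq_div (u := ip (φ (x, a)) Δ) hη
    have g4 : (ip (φ (x, πhat x)) Δ) ^ 2 ≤ S x := by
      rw [hSdef]
      exact Finset.single_le_sum (f := fun a' : 𝒜 => (ip (φ (x, a')) Δ) ^ 2)
        (fun a' _ => sq_nonneg _) (Finset.mem_univ (πhat x))
    have g5 : (ip (φ (x, a)) Δ) ^ 2 ≤ S x := by
      rw [hSdef]
      exact Finset.single_le_sum (f := fun a' : 𝒜 => (ip (φ (x, a')) Δ) ^ 2)
        (fun a' _ => sq_nonneg _) (Finset.mem_univ a)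
    have key : |ip (φ (x, πhat x)) Δ| + |ip (φ (x, a)) Δ| ≤ S x / η + η := by
      have step1 : |ip (φ (x, πhat x)) Δ| + |ip (φ (x, a)) Δ| ≤
          ((S x + η ^ 2) + (S x + η ^ 2)) / (2 * η) := by
        refine (add_le_add g2 g3).trans ?_
        rw [← add_div]
        gcongr
      have step2 : ((S x + η ^ 2) + (S x + η ^ 2)) / (2 * η) = S x / η + η := by
        field_simp; ring
      rw [step2] at step1; exact step1
    have t1 : ip (φ (x, πhat x)) Δ ≤ |ip (φ (x, πhat x)) Δ| := le_abs_self _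
    have t2 : -(ip (φ (x, a)) Δ) ≤ |ip (φ (x, a)) Δ| := neg_le_abs _
    linarith
  have hF0 : ∀ x, 0 ≤ ((⨆ a : 𝒜, ip (φ (x, a)) θstar) - ip (φ (x, πhat x)) θstar) := by
    intro x
    rw [sub_nonneg]
    exact le_ciSup (f := fun a : 𝒜 => ip (φ (x, a)) θstar)
      (Set.Finite.bddAbove (Set.finite_range _)) (πhat x)
  -- integrability
  have hSint : Integrable S ν := integrable_of_bdd hSm hSb
  have hterm_int : ∀ a : 𝒜, Integrable (fun x => (ip (φ (x, a)) Δ) ^ 2) ν := fun a =>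
    integrable_of_bdd ((measurable_ip (hφm a) Δ).pow_const 2)
      (fun x => by rw [abs_of_nonneg (sq_nonneg _)]; exact hipb x a)
  have hhint : Integrable (fun x => S x / η + η) ν :=
    (hSint.div_const η).add (integrable_const η)
  have hmono : (∫ x, ((⨆ a : 𝒜, ip (φ (x, a)) θstar) - ip (φ (x, πhat x)) θstar) ∂ν) ≤
      ∫ x, (S x / η + η) ∂ν :=
    integral_mono_of_nonneg (Filter.Eventually.of_forall hF0) hhint
      (Filter.Eventually.of_forall hFle)
  -- compute ∫ h
  have hμjm : Measurable fun p : 𝒳 × 𝒜 => (ip (φ p) Δ) ^ 2 := by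
    have : Measurable φ := by
      apply measurable_pi_iff.mpr
      intro k
      apply measurable_from_prod_countable_left (f := fun p : 𝒳 × 𝒜 => φ p k)
      intro a; exact (measurable_pi_apply k).comp (hφm a)
    exact (measurable_ip this Δ).pow_const 2
  have hμjb : ∀ p : 𝒳 × 𝒜, |(ip (φ p) Δ) ^ 2| ≤ D ^ 2 := fun p => by
    rw [abs_of_nonneg (sq_nonneg _)]; exact hipb p.1 p.2
  have hprodeq := integral_prod_pmf (f := fun p : 𝒳 × 𝒜 => (ip (φ p) Δ) ^ 2) ν hμjm hμjb
  have hsumS : ∫ x, S x ∂ν = A * ∫ p, (ip (φ p) Δ) ^ 2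
      ∂(ν.prod (PMF.uniformOfFintype 𝒜).toMeasure) := by
    rw [hprodeq, hSdef]
    rw [integral_finset_sum _ fun a _ => hterm_int a]
    rw [← mul_assoc, mul_inv_cancel₀ (ne_of_gt hA0), one_mul]
  have hinth : ∫ x, (S x / η + η) ∂ν = (∫ x, S x ∂ν) / η + η := by
    rw [integral_add (hSint.div_const η) (integrable_const η), integral_div, integral_const]
    simp
  have hfinal : (∫ x, S x ∂ν) / η + η ≤ ε := by
    rw [hsumS]
    have h1 : A * (∫ p, (ip (φ p) Δ) ^ 2 ∂(ν.prod (PMF.uniformOfFintype 𝒜).toMeasure)) ≤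
        A * (ε ^ 2 / (4 * A)) := by
      exact mul_le_mul_of_nonneg_left hE (le_of_lt hA0)
    have h2 : A * (ε ^ 2 / (4 * A)) = ε ^ 2 / 4 := by field_simp
    have h3 : (ε ^ 2 / 4) / η = η := by rw [hηdef]; field_simp; ring
    have h4 : A * (∫ p, (ip (φ p) Δ) ^ 2
        ∂(ν.prod (PMF.uniformOfFintype 𝒜).toMeasure)) / η ≤ ε ^ 2 / 4 / η := by
      rw [← h2]
      gcongr
    linarith [h3 ▸ h4]
  calc (∫ x, ((⨆ a : 𝒜, ip (φ (x, a)) θstar) - ip (φ (x, πhat x)) θstar) ∂ν) ≤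
        ∫ x, (S x / η + η) ∂ν := hmono
    _ = (∫ x, S x ∂ν) / η + η := hinth
    _ ≤ ε := hfinal

private lemma gram_to_E {d : ℕ} {Ω : Type*} [MeasurableSpace Ω] {μ : Measure Ω}
    [IsProbabilityMeasure μ] {φ : Ω → Fin d → ℝ} (hφjm : Measurable φ)
    (hφb : ∀ (p : Ω) (i : Fin d), |φ p i| ≤ 1) {N : ℕ} (hN : 0 < N) (ω : Fin N → Ω)
    {t : ℝ} (m : Fin d → Fin d → ℝ) (hm : ∀ k l, m k l = ∫ p, φ p k * φ p l ∂μ)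
    (hgram : ∀ k l, |(∑ j, φ (ω j) k * φ (ω j) l) - N * m k l| ≤ N * t)
    (Δ : Fin d → ℝ) (hemp : ∑ j, (ip (φ (ω j)) Δ) ^ 2 = 0) :
    ∫ p, (ip (φ p) Δ) ^ 2 ∂μ ≤ (l1norm Δ) ^ 2 * t := by
  have hint_kl : ∀ k l : Fin d, Integrable (fun p => φ p k * φ p l) μ := fun k l =>
    integrable_of_bdd (((measurable_pi_apply k).comp hφjm).mul
      ((measurable_pi_apply l).comp hφjm)) (B := 1) fun p => by
        rw [abs_mul]
        exact mul_le_one₀ (hφb p k) (abs_nonneg _) (hφb p l)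
  have hEeq : ∫ p, (ip (φ p) Δ) ^ 2 ∂μ = ∑ k, ∑ l, (Δ k * Δ l) * m k l := by
    simp_rw [sq_ip]
    rw [integral_finset_sum _ fun k _ =>
      (integrable_finset_sum _ fun l _ => (hint_kl k l).const_mul _)]
    refine Finset.sum_congr rfl fun k _ => ?_
    rw [integral_finset_sum _ fun l _ => (hint_kl k l).const_mul _]
    exact Finset.sum_congr rfl fun l _ => by rw [MeasureTheory.integral_const_mul, hm]
  have hswap : ∑ k, ∑ l, (Δ k * Δ l) * (∑ j, φ (ω j) k * φ (ω j) l) = 0 := by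
    have e1 : ∀ k l, (Δ k * Δ l) * (∑ j, φ (ω j) k * φ (ω j) l) =
        ∑ j, (Δ k * Δ l) * (φ (ω j) k * φ (ω j) l) := fun k l => Finset.mul_sum _ _ _
    simp_rw [e1]
    calc ∑ k, ∑ l, ∑ j, (Δ k * Δ l) * (φ (ω j) k * φ (ω j) l)
        = ∑ k, ∑ j, ∑ l, (Δ k * Δ l) * (φ (ω j) k * φ (ω j) l) :=
          Finset.sum_congr rfl fun k _ => Finset.sum_comm
      _ = ∑ j, ∑ k, ∑ l, (Δ k * Δ l) * (φ (ω j) k * φ (ω j) l) := Finset.sum_comm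
      _ = ∑ j, (ip (φ (ω j)) Δ) ^ 2 := by
          refine Finset.sum_congr rfl fun j _ => ?_
          rw [sq_ip]
      _ = 0 := hemp
  have habs : ∑ k, ∑ l, |Δ k * Δ l| = (l1norm Δ) ^ 2 := by
    simp_rw [abs_mul]
    rw [l1norm, sq, Finset.sum_mul_sum]
  have key : (N : ℝ) * ∫ p, (ip (φ p) Δ) ^ 2 ∂μ ≤ (N : ℝ) * ((l1norm Δ) ^ 2 * t) := by
    rw [hEeq, Finset.mul_sum]
    have step : ∀ k : Fin d, (N : ℝ) * ∑ l, (Δ k * Δ l) * m k l ≤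
        ∑ l, ((Δ k * Δ l) * (∑ j, φ (ω j) k * φ (ω j) l) + |Δ k * Δ l| * ((N : ℝ) * t)) := by
      intro k
      rw [Finset.mul_sum]
      refine Finset.sum_le_sum fun l _ => ?_
      have h1 : (N : ℝ) * ((Δ k * Δ l) * m k l) -
          (Δ k * Δ l) * (∑ j, φ (ω j) k * φ (ω j) l) =
          (Δ k * Δ l) * ((N : ℝ) * m k l - ∑ j, φ (ω j) k * φ (ω j) l) := by ring
      have h2 : (Δ k * Δ l) * ((N : ℝ) * m k l - ∑ j, φ (ω j) k * φ (ω j) l) ≤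
          |Δ k * Δ l| * ((N : ℝ) * t) := by
        calc (Δ k * Δ l) * ((N : ℝ) * m k l - ∑ j, φ (ω j) k * φ (ω j) l) ≤
            |(Δ k * Δ l) * ((N : ℝ) * m k l - ∑ j, φ (ω j) k * φ (ω j) l)| := le_abs_self _
          _ = |Δ k * Δ l| * |(N : ℝ) * m k l - ∑ j, φ (ω j) k * φ (ω j) l| := abs_mul _ _
          _ ≤ |Δ k * Δ l| * ((N : ℝ) * t) := by
              refine mul_le_mul_of_nonneg_left ?_ (abs_nonneg _)
              rw [abs_sub_comm]
              exact hgram k l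
      linarith
    calc ∑ k, (N : ℝ) * ∑ l, (Δ k * Δ l) * m k l ≤
        ∑ k, ∑ l, ((Δ k * Δ l) * (∑ j, φ (ω j) k * φ (ω j) l) + |Δ k * Δ l| * ((N : ℝ) * t)) :=
          Finset.sum_le_sum fun k _ => step k
      _ = (∑ k, ∑ l, (Δ k * Δ l) * (∑ j, φ (ω j) k * φ (ω j) l)) +
          (∑ k, ∑ l, |Δ k * Δ l|) * ((N : ℝ) * t) := by
          rw [Finset.sum_mul, ← Finset.sum_add_distrib]
          refine Finset.sum_congr rfl fun k _ => ?_
          rw [Finset.sum_mul, ← Finset.sum_add_distrib]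
      _ = (N : ℝ) * ((l1norm Δ) ^ 2 * t) := by rw [hswap, habs]; ring
  have hNpos : (0 : ℝ) < N := by exact_mod_cast hN
  exact le_of_mul_le_mul_left key hNpos

set_option maxHeartbeats 2000000 in
/-- Lasso-based learning of a near-optimal greedy policy in a horizon-1
ℓ₁-bounded linear MDP (linear contextual bandit): with `N ≥ C₀ C⁴ A² ε⁻⁴ log(d/δ)`
i.i.d. samples `(xⁱ, aⁱ)` with `xⁱ ∼ ν` and `aⁱ` uniform, any ℓ₁-constrained least-squares
minimizer `θ̂` and any greedy policy `π̂` for it has suboptimality at most `ε`, with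
probability at least `1 − δ`. -/
theorem stmt_0 :
    ∃ C₀ : ℝ, 0 < C₀ ∧
      ∀ (d : ℕ) (𝒜 : Type) [Fintype 𝒜] [Nonempty 𝒜] [MeasurableSpace 𝒜]
        [MeasurableSingletonClass 𝒜]
        (𝒳 : Type) [MeasurableSpace 𝒳]
        (ν : Measure 𝒳) [IsProbabilityMeasure ν]
        (φ : 𝒳 × 𝒜 → Fin d → ℝ),
        (∀ a : 𝒜, Measurable fun x : 𝒳 => φ (x, a)) →
        (∀ (x : 𝒳) (a : 𝒜) (i : Fin d), |φ (x, a) i| ≤ 1) →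
        ∀ C : ℝ, 1 ≤ C →
        ∀ θstar : Fin d → ℝ, l1norm θstar ≤ C →
        ∀ ε δ : ℝ, 0 < ε → ε < 1 → 0 < δ → δ < 1 →
        ∀ N : ℕ,
          C₀ * C ^ 4 * (Fintype.card 𝒜 : ℝ) ^ 2 * ε⁻¹ ^ 4 * Real.log ((d : ℝ) / δ) ≤ (N : ℝ) →
          ENNReal.ofReal (1 - δ) ≤
            (Measure.pi fun _ : Fin N => ν.prod (PMF.uniformOfFintype 𝒜).toMeasure)
              {ω : Fin N → 𝒳 × 𝒜 |
                ∀ θhat : Fin d → ℝ,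
                  l1norm θhat ≤ C →
                  (∀ θ : Fin d → ℝ, l1norm θ ≤ C →
                    ∑ j : Fin N, (ip (φ (ω j)) θhat - ip (φ (ω j)) θstar) ^ 2 ≤
                      ∑ j : Fin N, (ip (φ (ω j)) θ - ip (φ (ω j)) θstar) ^ 2) →
                  ∀ πhat : 𝒳 → 𝒜, Measurable πhat →
                    (∀ (x : 𝒳) (a : 𝒜), ip (φ (x, a)) θhat ≤ ip (φ (x, πhat x)) θhat) →
                    (∫ x : 𝒳,
                      ((⨆ a : 𝒜, ip (φ (x, a)) θstar) - ip (φ (x, πhat x)) θstar) ∂ν) ≤ ε} := by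
  refine ⟨20000, by norm_num, ?_⟩
  intro d 𝒜 _ _ _ _ 𝒳 _ ν _ φ hφm hφb C hC θstar hθ1 ε δ hε hε1 hδ hδ1 N hN
  classical
  set A : ℝ := (Fintype.card 𝒜 : ℝ) with hAdef
  have hA1 : 1 ≤ A := by
    rw [hAdef]; exact_mod_cast Fintype.card_pos
  have hA0 : 0 < A := lt_of_lt_of_le one_pos hA1
  have hC0 : 0 < C := lt_of_lt_of_le one_pos hC
  set μ : Measure (𝒳 × 𝒜) := ν.prod (PMF.uniformOfFintype 𝒜).toMeasure with hμdef
  haveI : IsProbabilityMeasure μ := by rw [hμdef]; infer_instance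
  have hφjm : Measurable φ :=
    measurable_pi_iff.mpr fun k =>
      measurable_from_prod_countable_left fun a => (measurable_pi_apply k).comp (hφm a)
  have hφjb : ∀ (p : 𝒳 × 𝒜) (i : Fin d), |φ p i| ≤ 1 := fun p i => hφb p.1 p.2 i
  by_cases hd0 : d = 0
  · -- trivial case d = 0
    subst hd0
    have hmem : ∀ ω : Fin N → 𝒳 × 𝒜, ω ∈
        {ω : Fin N → 𝒳 × 𝒜 |
          ∀ θhat : Fin 0 → ℝ,
            l1norm θhat ≤ C →
            (∀ θ : Fin 0 → ℝ, l1norm θ ≤ C →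
              ∑ j : Fin N, (ip (φ (ω j)) θhat - ip (φ (ω j)) θstar) ^ 2 ≤
                ∑ j : Fin N, (ip (φ (ω j)) θ - ip (φ (ω j)) θstar) ^ 2) →
            ∀ πhat : 𝒳 → 𝒜, Measurable πhat →
              (∀ (x : 𝒳) (a : 𝒜), ip (φ (x, a)) θhat ≤ ip (φ (x, πhat x)) θhat) →
              (∫ x : 𝒳,
                ((⨆ a : 𝒜, ip (φ (x, a)) θstar) - ip (φ (x, πhat x)) θstar) ∂ν) ≤ ε} := by
      intro ω
      simp only [Set.mem_setOf_eq]
      intro θhat _ _ πhat _ _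
      have hip0 : ∀ (p : 𝒳 × 𝒜) (θ : Fin 0 → ℝ), ip (φ p) θ = 0 := by
        intro p θ; simp [ip]
      have : ∀ x : 𝒳, ((⨆ a : 𝒜, ip (φ (x, a)) θstar) - ip (φ (x, πhat x)) θstar) = 0 := by
        intro x
        simp_rw [hip0]
        rw [ciSup_const]
        ring
      simp_rw [this]
      rw [integral_zero]
      linarith
    exact compl_bound hδ.le (B := (∅ : Set (Fin N → 𝒳 × 𝒜))) (by simp) fun ω _ => hmem ω
  · have hd1 : 1 ≤ d := Nat.one_le_iff_ne_zero.mpr hd0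
    have hdR : (1 : ℝ) ≤ (d : ℝ) := by exact_mod_cast hd1
    have hdδpos : (0 : ℝ) < (d : ℝ) / δ := by positivity
    by_cases hsmall : (d : ℝ) / δ < 2
    · -- d = 1 case
      have hdle : (d : ℝ) ≤ (d : ℝ) / δ := by
        rw [le_div_iff₀ hδ]
        nlinarith
      have hd2 : (d : ℝ) < 2 := lt_of_le_of_lt hdle hsmall
      have hd1' : d = 1 := by
        have h2 : d < 2 := by exact_mod_cast hd2
        omega
      subst hd1'
      set S : Set (𝒳 × 𝒜) := {p | φ p 0 ≠ 0} with hSdef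
      have hphi0 : Measurable fun p : 𝒳 × 𝒜 => φ p 0 := (measurable_pi_apply 0).comp hφjm
      have hSM : MeasurableSet S := by
        have he : S = (fun p : 𝒳 × 𝒜 => φ p 0) ⁻¹' ({0}ᶜ) := by
          ext p; simp [hSdef]
        rw [he]
        exact hphi0 (measurableSet_singleton 0).compl
      have hip1 : ∀ u v : Fin 1 → ℝ, ip u v = u 0 * v 0 := by
        intro u v; rw [ip, Fin.sum_univ_one]
      have hqr1 : (μ S).toReal ≤ 1 := by
        have h1 : (μ S).toReal ≤ (μ Set.univ).toReal :=
          ENNReal.toReal_mono (measure_ne_top _ _) (measure_mono (Set.subset_univ _))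
        simpa using h1
      have hF0 : ∀ (πhat : 𝒳 → 𝒜) (x : 𝒳),
          ip (φ (x, πhat x)) θstar ≤ ⨆ a : 𝒜, ip (φ (x, a)) θstar := fun πhat x =>
        le_ciSup (f := fun a : 𝒜 => ip (φ (x, a)) θstar)
          (Set.Finite.bddAbove (Set.finite_range _)) (πhat x)
      by_cases hq : (μ S).toReal ≤ ε / (2 * C * A ^ 2)
      · -- small mass: the suboptimality is always small
        set Tset : Set 𝒳 := ⋃ a : 𝒜, {x | φ (x, a) 0 ≠ 0} with hTdef
        have hTa : ∀ a : 𝒜, ν {x | φ (x, a) 0 ≠ 0} ≤ (Fintype.card 𝒜 : ENNReal) * μ S := by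
          intro a
          have hsub2 : {x | φ (x, a) 0 ≠ 0} ×ˢ ({a} : Set 𝒜) ⊆ S := by
            rintro ⟨x, b⟩ ⟨hx, hb⟩
            simp only [Set.mem_singleton_iff] at hb
            subst hb
            exact hx
          have hμsub : ν {x | φ (x, a) 0 ≠ 0} * (PMF.uniformOfFintype 𝒜).toMeasure {a} ≤ μ S := by
            rw [hμdef, ← Measure.prod_prod]
            exact measure_mono hsub2
          have huni : (PMF.uniformOfFintype 𝒜).toMeasure {a} = (Fintype.card 𝒜 : ENNReal)⁻¹ := by
            rw [PMF.toMeasure_apply_singleton _ _ (measurableSet_singleton a),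
              PMF.uniformOfFintype_apply]
          rw [huni] at hμsub
          have hcard0 : (Fintype.card 𝒜 : ENNReal) ≠ 0 := by
            simp [Fintype.card_ne_zero]
          have hcardtop : (Fintype.card 𝒜 : ENNReal) ≠ ⊤ := ENNReal.natCast_ne_top _
          have hinv0 : (Fintype.card 𝒜 : ENNReal)⁻¹ ≠ 0 := ENNReal.inv_ne_zero.mpr hcardtop
          have hinvtop : (Fintype.card 𝒜 : ENNReal)⁻¹ ≠ ⊤ := ENNReal.inv_ne_top.mpr hcard0
          have h2 := (ENNReal.le_div_iff_mul_le (Or.inl hinv0) (Or.inl hinvtop)).mpr hμsub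
          rwa [div_eq_mul_inv, inv_inv, mul_comm] at h2
        have hTM : MeasurableSet Tset := by
          rw [hTdef]
          refine MeasurableSet.iUnion fun a => ?_
          have he : {x : 𝒳 | φ (x, a) 0 ≠ 0} = (fun x => φ (x, a) 0) ⁻¹' ({0}ᶜ) := by
            ext x; simp
          rw [he]
          exact ((measurable_pi_apply 0).comp (hφm a)) (measurableSet_singleton 0).compl
        have hT : ν Tset ≤ (Fintype.card 𝒜 : ENNReal) ^ 2 * μ S := by
          rw [hTdef]
          refine (measure_iUnion_le _).trans ?_
          rw [tsum_fintype]
          calc ∑ a : 𝒜, ν {x | φ (x, a) 0 ≠ 0} ≤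
              ∑ _a : 𝒜, (Fintype.card 𝒜 : ENNReal) * μ S := Finset.sum_le_sum fun a _ => hTa a
            _ = (Fintype.card 𝒜 : ENNReal) ^ 2 * μ S := by
                rw [Finset.sum_const, Finset.card_univ, nsmul_eq_mul]
                ring
        have hTreal : (ν Tset).toReal ≤ A ^ 2 * (μ S).toReal := by
          have hne : ((Fintype.card 𝒜 : ENNReal) ^ 2 * μ S) ≠ ⊤ :=
            ENNReal.mul_ne_top (ENNReal.pow_ne_top (ENNReal.natCast_ne_top _))
              (measure_ne_top _ _)
          have h2 := ENNReal.toReal_mono hne hT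
          rwa [ENNReal.toReal_mul, ENNReal.toReal_pow, ENNReal.toReal_natCast] at h2
        have hmem : ∀ ω : Fin N → 𝒳 × 𝒜,
            ∀ θhat : Fin 1 → ℝ,
              l1norm θhat ≤ C →
              (∀ θ : Fin 1 → ℝ, l1norm θ ≤ C →
                ∑ j : Fin N, (ip (φ (ω j)) θhat - ip (φ (ω j)) θstar) ^ 2 ≤
                  ∑ j : Fin N, (ip (φ (ω j)) θ - ip (φ (ω j)) θstar) ^ 2) →
              ∀ πhat : 𝒳 → 𝒜, Measurable πhat →
                (∀ (x : 𝒳) (a : 𝒜), ip (φ (x, a)) θhat ≤ ip (φ (x, πhat x)) θhat) →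
                (∫ x : 𝒳,
                  ((⨆ a : 𝒜, ip (φ (x, a)) θstar) - ip (φ (x, πhat x)) θstar) ∂ν) ≤ ε := by
          intro ω θhat hθhat hmin πhat hπm hπgr
          have hipbound : ∀ (x : 𝒳) (a : 𝒜), |ip (φ (x, a)) θstar| ≤ C := fun x a =>
            (abs_ip_le fun i => hφb x a i).trans hθ1
          have hFle : ∀ x, (⨆ a : 𝒜, ip (φ (x, a)) θstar) - ip (φ (x, πhat x)) θstar ≤
              Tset.indicator (fun _ => 2 * C) x := by
            intro x
            by_cases hx : x ∈ Tset
            · rw [Set.indicator_of_mem hx]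
              have h1 : (⨆ a : 𝒜, ip (φ (x, a)) θstar) ≤ C :=
                ciSup_le fun a => (le_abs_self _).trans (hipbound x a)
              have h2 := (abs_le.mp (hipbound x (πhat x))).1
              linarith
            · rw [Set.indicator_of_notMem hx]
              have hzero : ∀ a : 𝒜, φ (x, a) 0 = 0 := by
                intro a
                by_contra hcon
                exact hx (by rw [hTdef]; exact Set.mem_iUnion.mpr ⟨a, hcon⟩)
              have hz2 : ∀ a : 𝒜, ip (φ (x, a)) θstar = 0 := fun a => by
                rw [hip1, hzero a, zero_mul]
              simp_rw [hz2]
              rw [ciSup_const]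
              simp
          have hIind : Integrable (Tset.indicator fun _ => 2 * C) ν :=
            (integrable_const (2 * C)).indicator hTM
          have hFint := integral_mono_of_nonneg
            (Filter.Eventually.of_forall fun x => sub_nonneg.mpr (hF0 πhat x)) hIind
            (Filter.Eventually.of_forall hFle)
          have hind : ∫ x, Tset.indicator (fun _ => 2 * C) x ∂ν =
              (ν Tset).toReal * (2 * C) := by
            rw [integral_indicator_const _ hTM]
            simp [smul_eq_mul, measureReal_def]
          have hlast : (ν Tset).toReal * (2 * C) ≤ ε := by
            have hmu0 : (0 : ℝ) ≤ (μ S).toReal := ENNReal.toReal_nonneg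
            have h3 : (ν Tset).toReal ≤ A ^ 2 * (ε / (2 * C * A ^ 2)) := by
              refine hTreal.trans ?_
              exact mul_le_mul_of_nonneg_left hq (by positivity)
            have h4 : A ^ 2 * (ε / (2 * C * A ^ 2)) = ε / (2 * C) := by
              field_simp
            rw [h4] at h3
            have h5 : (ν Tset).toReal * (2 * C) ≤ (ε / (2 * C)) * (2 * C) :=
              mul_le_mul_of_nonneg_right h3 (by positivity)
            calc (ν Tset).toReal * (2 * C) ≤ (ε / (2 * C)) * (2 * C) := h5
              _ = ε := by field_simp
          calc (∫ x : 𝒳,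
              ((⨆ a : 𝒜, ip (φ (x, a)) θstar) - ip (φ (x, πhat x)) θstar) ∂ν) ≤
              ∫ x, Tset.indicator (fun _ => 2 * C) x ∂ν := hFint
            _ = (ν Tset).toReal * (2 * C) := hind
            _ ≤ ε := hlast
        exact compl_bound hδ.le (B := (∅ : Set (Fin N → 𝒳 × 𝒜))) (by simp)
          fun ω _ => hmem ω
      · -- large mass: some sample hits S with high probability
        push_neg at hq
        set Bad1 : Set (Fin N → 𝒳 × 𝒜) := {ω | ∀ j, ω j ∈ Sᶜ} with hB1def
        have hBadeq : Bad1 = Set.pi Set.univ (fun _ : Fin N => Sᶜ) := by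
          ext ω
          simp [hB1def, Set.mem_pi]
        have hμBad : (Measure.pi fun _ : Fin N => μ) Bad1 ≤ ENNReal.ofReal δ := by
          rw [hBadeq, Measure.pi_pi]
          have hSc : μ Sᶜ = ENNReal.ofReal (1 - (μ S).toReal) := by
            rw [measure_compl hSM (measure_ne_top _ _), measure_univ,
              ENNReal.ofReal_sub _ ENNReal.toReal_nonneg, ENNReal.ofReal_one,
              ENNReal.ofReal_toReal (measure_ne_top μ S)]
          rw [Finset.prod_const, Finset.card_univ, Fintype.card_fin, hSc,
            ← ENNReal.ofReal_pow (by linarith : (0 : ℝ) ≤ 1 - (μ S).toReal)]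
          refine ENNReal.ofReal_le_ofReal ?_
          set qr := (μ S).toReal with hqrdef
          have hqr0 : (0 : ℝ) ≤ qr := ENNReal.toReal_nonneg
          have hstep : (1 - qr) ^ N ≤ Real.exp (-qr) ^ N :=
            pow_le_pow_left₀ (by linarith) (by linarith [Real.add_one_le_exp (-qr)]) N
          have hexp : Real.exp (-qr) ^ N = Real.exp (-((N : ℝ) * qr)) := by
            rw [← Real.exp_nat_mul]
            congr 1
            ring
          have hεinv : (1 : ℝ) ≤ ε⁻¹ := by
            rw [le_inv_comm₀ one_pos hε]
            simpa using hε1.le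
          have hLδ : Real.log ((1 : ℝ) / δ) = -Real.log δ := by
            rw [one_div, Real.log_inv]
          have hLpos2 : (0 : ℝ) ≤ -Real.log δ := by
            have := Real.log_nonpos hδ.le hδ1.le
            linarith
          have hNbig : -Real.log δ ≤ (N : ℝ) * qr := by
            have hNge : 20000 * C ^ 4 * A ^ 2 * ε⁻¹ ^ 4 * (-Real.log δ) ≤ (N : ℝ) := by
              have := hN
              rw [Nat.cast_one, hLδ] at this
              exact this
            have hq2 : ε / (2 * C * A ^ 2) ≤ qr := hq.le
            have hNnn : (0 : ℝ) ≤ (N : ℝ) := Nat.cast_nonneg N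
            have hmul : (20000 * C ^ 4 * A ^ 2 * ε⁻¹ ^ 4 * (-Real.log δ)) *
                (ε / (2 * C * A ^ 2)) ≤ (N : ℝ) * qr := by
              refine mul_le_mul hNge hq2 (by positivity) hNnn
            have heq2 : (20000 * C ^ 4 * A ^ 2 * ε⁻¹ ^ 4 * (-Real.log δ)) *
                (ε / (2 * C * A ^ 2)) = 10000 * C ^ 3 * ε⁻¹ ^ 3 * (-Real.log δ) := by
              field_simp
              ring
            rw [heq2] at hmul
            have hone : (1 : ℝ) ≤ 10000 * C ^ 3 * ε⁻¹ ^ 3 := by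
              have hc3 : (1 : ℝ) ≤ C ^ 3 := one_le_pow₀ hC
              have he3 : (1 : ℝ) ≤ ε⁻¹ ^ 3 := one_le_pow₀ hεinv
              nlinarith
            nlinarith
          calc (1 - qr) ^ N ≤ Real.exp (-((N : ℝ) * qr)) := hstep.trans (le_of_eq hexp)
            _ ≤ Real.exp (Real.log δ) := by
                apply Real.exp_le_exp.2
                linarith
            _ = δ := Real.exp_log hδ
        have hsub1 : Bad1ᶜ ⊆
            {ω : Fin N → 𝒳 × 𝒜 |
              ∀ θhat : Fin 1 → ℝ,
                l1norm θhat ≤ C →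
                (∀ θ : Fin 1 → ℝ, l1norm θ ≤ C →
                  ∑ j : Fin N, (ip (φ (ω j)) θhat - ip (φ (ω j)) θstar) ^ 2 ≤
                    ∑ j : Fin N, (ip (φ (ω j)) θ - ip (φ (ω j)) θstar) ^ 2) →
                ∀ πhat : 𝒳 → 𝒜, Measurable πhat →
                  (∀ (x : 𝒳) (a : 𝒜), ip (φ (x, a)) θhat ≤ ip (φ (x, πhat x)) θhat) →
                  (∫ x : 𝒳,
                    ((⨆ a : 𝒜, ip (φ (x, a)) θstar) - ip (φ (x, πhat x)) θstar) ∂ν) ≤ ε} := by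
          intro ω hω
          have hex : ∃ j : Fin N, φ (ω j) 0 ≠ 0 := by
            by_contra hcon
            push_neg at hcon
            refine hω ?_
            rw [hB1def]
            intro j
            simp only [Set.mem_compl_iff, hSdef, Set.mem_setOf_eq, not_not]
            exact hcon j
          obtain ⟨j₀, hj₀⟩ := hex
          simp only [Set.mem_setOf_eq]
          intro θhat hθhat hmin πhat hπm hπgr
          have h1 := hmin θstar hθ1
          have h2 : ∑ j : Fin N, (ip (φ (ω j)) θstar - ip (φ (ω j)) θstar) ^ 2 = 0 := by simp
          rw [h2] at h1
          have hsum0 : ∑ j : Fin N, (ip (φ (ω j)) θhat - ip (φ (ω j)) θstar) ^ 2 = 0 :=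
            le_antisymm h1 (Finset.sum_nonneg fun j _ => sq_nonneg _)
          have hall := (Finset.sum_eq_zero_iff_of_nonneg fun j _ => sq_nonneg _).mp hsum0
          have hj := hall j₀ (Finset.mem_univ _)
          rw [pow_eq_zero_iff (two_ne_zero), sub_eq_zero, hip1, hip1] at hj
          have hθeq : θhat = θstar := by
            funext i
            have hi : i = 0 := Subsingleton.elim i 0
            rw [hi]
            exact mul_left_cancel₀ hj₀ hj
          subst hθeq
          have hFle : ∀ x, (⨆ a : 𝒜, ip (φ (x, a)) θhat) - ip (φ (x, πhat x)) θhat ≤ 0 :=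
            fun x => sub_nonpos.mpr (ciSup_le fun a => hπgr x a)
          calc (∫ x : 𝒳,
              ((⨆ a : 𝒜, ip (φ (x, a)) θhat) - ip (φ (x, πhat x)) θhat) ∂ν) ≤ 0 :=
              integral_nonpos fun x => hFle x
            _ ≤ ε := hε.le
        exact compl_bound hδ.le hμBad hsub1

    · -- main case
      push_neg at hsmall
      set L : ℝ := Real.log ((d : ℝ) / δ) with hLdef
      have hL2 : Real.log 2 ≤ L := Real.log_le_log (by norm_num) hsmall
      have hLpos : 0 < L := lt_of_lt_of_le (Real.log_pos (by norm_num)) hL2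
      set t : ℝ := ε ^ 2 / (16 * A * C ^ 2) with htdef
      have ht0 : 0 < t := by rw [htdef]; positivity
      have ht1 : t ≤ 1 := by
        rw [htdef, div_le_one (by positivity)]
        nlinarith
      set m : Fin d → Fin d → ℝ := fun k l => ∫ p, φ p k * φ p l ∂μ with hmdef
      have hφkl_meas : ∀ k l : Fin d, Measurable fun p : 𝒳 × 𝒜 => φ p k * φ p l := fun k l =>
        ((measurable_pi_apply k).comp hφjm).mul ((measurable_pi_apply l).comp hφjm)
      have hφkl_bdd : ∀ (k l : Fin d) (p : 𝒳 × 𝒜), |φ p k * φ p l| ≤ 1 := fun k l p => by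
        rw [abs_mul]
        exact mul_le_one₀ (hφjb p k) (abs_nonneg _) (hφjb p l)
      have hmb : ∀ k l, |m k l| ≤ 1 := by
        intro k l
        rw [hmdef]
        calc |∫ p, φ p k * φ p l ∂μ| ≤ ∫ p, |φ p k * φ p l| ∂μ := by
              simpa only [Real.norm_eq_abs] using
                MeasureTheory.norm_integral_le_integral_norm (μ := μ)
                  (f := fun p : 𝒳 × 𝒜 => φ p k * φ p l)
          _ ≤ ∫ _p, (1 : ℝ) ∂μ :=
              integral_mono (integrable_of_bdd (hφkl_meas k l) (hφkl_bdd k l)).abs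
                (integrable_const 1) (fun p => by simpa using hφkl_bdd k l p)
          _ = 1 := by simp
      set g : Fin d → Fin d → 𝒳 × 𝒜 → ℝ := fun k l p => φ p k * φ p l - m k l with hgdef
      have hgm : ∀ k l, Measurable (g k l) := fun k l => (hφkl_meas k l).sub_const _
      have hgb : ∀ k l p, |g k l p| ≤ 2 := by
        intro k l p
        rw [hgdef]
        calc |φ p k * φ p l - m k l| ≤ |φ p k * φ p l| + |m k l| := abs_sub _ _
          _ ≤ 1 + 1 := add_le_add (hφkl_bdd k l p) (hmb k l)
          _ = 2 := by norm_num
      have hg0 : ∀ k l, ∫ p, g k l p ∂μ = 0 := by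
        intro k l
        rw [hgdef]
        rw [integral_sub (integrable_of_bdd (hφkl_meas k l) (hφkl_bdd k l)) (integrable_const _),
          integral_const]
        simp [hmdef]
      have hgneg_b : ∀ k l p, |-(g k l p)| ≤ 2 := fun k l p => by
        rw [abs_neg]; exact hgb k l p
      have hgneg_0 : ∀ k l, ∫ p, -(g k l p) ∂μ = 0 := by
        intro k l
        rw [integral_neg, hg0, neg_zero]
      set U : Fin d → Fin d → Set (Fin N → 𝒳 × 𝒜) := fun k l =>
          ({ω : Fin N → 𝒳 × 𝒜 | (N : ℝ) * t ≤ ∑ j, g k l (ω j)} ∪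
           {ω : Fin N → 𝒳 × 𝒜 | (N : ℝ) * t ≤ ∑ j, -(g k l (ω j))}) with hUdef
      set Bad : Set (Fin N → 𝒳 × 𝒜) := ⋃ k : Fin d, ⋃ l : Fin d, U k l with hBadDef
      -- probability bound
      have hchern : ∀ k l : Fin d,
          (Measure.pi fun _ : Fin N => μ) (U k l) ≤
          ENNReal.ofReal (Real.exp (-((N : ℝ) * t ^ 2) / 16)) +
          ENNReal.ofReal (Real.exp (-((N : ℝ) * t ^ 2) / 16)) := by
        intro k l
        rw [hUdef]
        refine (measure_union_le _ _).trans (add_le_add ?_ ?_)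
        · exact chernoff μ (hgm k l) (hgb k l) (hg0 k l)
            (fun l' hl' hl2' => mgf_step (hgm k l) (hgb k l) (hg0 k l) hl' hl2') N ht0 ht1
        · exact chernoff μ (hgm k l).neg (hgneg_b k l) (hgneg_0 k l)
            (fun l' hl' hl2' => mgf_step (hgm k l).neg (hgneg_b k l) (hgneg_0 k l) hl' hl2')
            N ht0 ht1
      have hNt2 : 48 * L ≤ (N : ℝ) * t ^ 2 := by
        have e1 : (20000 * C ^ 4 * A ^ 2 * ε⁻¹ ^ 4 * L) * t ^ 2 = (625 / 8) * L := by
          rw [htdef]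
          field_simp
          ring
        have e2 : (20000 * C ^ 4 * A ^ 2 * ε⁻¹ ^ 4 * L) * t ^ 2 ≤ (N : ℝ) * t ^ 2 :=
          mul_le_mul_of_nonneg_right hN (sq_nonneg t)
        nlinarith
      have hlog3 : Real.log (2 * (d : ℝ) ^ 2 / δ) ≤ 3 * L := by
        have h2d : 2 * (d : ℝ) ^ 2 / δ = (2 * (d : ℝ)) * ((d : ℝ) / δ) := by
          field_simp
        have hlogd : Real.log (d : ℝ) ≤ L := by
          rw [hLdef, Real.log_div (by positivity) (ne_of_gt hδ)]
          have := Real.log_nonpos hδ.le hδ1.le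
          linarith
        rw [h2d, Real.log_mul (by positivity) (ne_of_gt hdδpos),
          Real.log_mul (by norm_num) (by positivity)]
        linarith
      have hexpδ : 2 * (d : ℝ) ^ 2 * Real.exp (-((N : ℝ) * t ^ 2) / 16) ≤ δ := by
        have hrhs : (0 : ℝ) < δ / (2 * (d : ℝ) ^ 2) := by positivity
        have hexp : Real.exp (-((N : ℝ) * t ^ 2) / 16) ≤ δ / (2 * (d : ℝ) ^ 2) := by
          rw [← Real.exp_log hrhs]
          apply Real.exp_le_exp.2
          have : Real.log (δ / (2 * (d : ℝ) ^ 2)) = -Real.log (2 * (d : ℝ) ^ 2 / δ) := by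
            rw [← Real.log_inv]
            congr 1
            field_simp
          rw [this]
          linarith
        calc 2 * (d : ℝ) ^ 2 * Real.exp (-((N : ℝ) * t ^ 2) / 16) ≤
            2 * (d : ℝ) ^ 2 * (δ / (2 * (d : ℝ) ^ 2)) := by
              exact mul_le_mul_of_nonneg_left hexp (by positivity)
          _ = δ := by field_simp
      have hBadMeas : (Measure.pi fun _ : Fin N => μ) Bad ≤ ENNReal.ofReal δ := by
        rw [hBadDef]
        have step1 : (Measure.pi fun _ : Fin N => μ) (⋃ k : Fin d, ⋃ l : Fin d, U k l) ≤
            ∑ k : Fin d, (Measure.pi fun _ : Fin N => μ) (⋃ l : Fin d, U k l) := by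
          simpa [tsum_fintype] using
            measure_iUnion_le (μ := Measure.pi fun _ : Fin N => μ)
              (s := fun k : Fin d => ⋃ l : Fin d, U k l)
        have step2 : ∀ k : Fin d, (Measure.pi fun _ : Fin N => μ) (⋃ l : Fin d, U k l) ≤
            ∑ l : Fin d, (Measure.pi fun _ : Fin N => μ) (U k l) := fun k => by
          simpa [tsum_fintype] using
            measure_iUnion_le (μ := Measure.pi fun _ : Fin N => μ) (s := U k)
        refine (step1.trans (Finset.sum_le_sum fun k _ => (step2 k).trans
          (Finset.sum_le_sum fun l _ => hchern k l))).trans ?_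
        calc ∑ _k : Fin d, ∑ _l : Fin d,
            (ENNReal.ofReal (Real.exp (-((N : ℝ) * t ^ 2) / 16)) +
             ENNReal.ofReal (Real.exp (-((N : ℝ) * t ^ 2) / 16)))
            = (d * d : ℕ) • (ENNReal.ofReal (Real.exp (-((N : ℝ) * t ^ 2) / 16)) +
              ENNReal.ofReal (Real.exp (-((N : ℝ) * t ^ 2) / 16))) := by
              rw [Finset.sum_const, Finset.sum_const, Finset.card_univ, Fintype.card_fin,
                smul_smul]
          _ = ENNReal.ofReal (((d * d : ℕ) : ℝ) * (Real.exp (-((N : ℝ) * t ^ 2) / 16) +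
              Real.exp (-((N : ℝ) * t ^ 2) / 16))) := by
              rw [← ENNReal.ofReal_add (Real.exp_pos _).le (Real.exp_pos _).le, nsmul_eq_mul,
                ← ENNReal.ofReal_natCast (d * d), ← ENNReal.ofReal_mul (by positivity)]
          _ ≤ ENNReal.ofReal δ := by
              refine ENNReal.ofReal_le_ofReal ?_
              push_cast
              nlinarith [hexpδ, Real.exp_pos (-((N : ℝ) * t ^ 2) / 16)]
      have hNpos : 0 < N := by
        have hpos : (0 : ℝ) < 20000 * C ^ 4 * A ^ 2 * ε⁻¹ ^ 4 * L := by positivity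
        have h2 : (0 : ℝ) < (N : ℝ) := lt_of_lt_of_le hpos hN
        exact_mod_cast h2
      -- good event implies low suboptimality
      have hsub : Badᶜ ⊆
          {ω : Fin N → 𝒳 × 𝒜 |
            ∀ θhat : Fin d → ℝ,
              l1norm θhat ≤ C →
              (∀ θ : Fin d → ℝ, l1norm θ ≤ C →
                ∑ j : Fin N, (ip (φ (ω j)) θhat - ip (φ (ω j)) θstar) ^ 2 ≤
                  ∑ j : Fin N, (ip (φ (ω j)) θ - ip (φ (ω j)) θstar) ^ 2) →
              ∀ πhat : 𝒳 → 𝒜, Measurable πhat →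
                (∀ (x : 𝒳) (a : 𝒜), ip (φ (x, a)) θhat ≤ ip (φ (x, πhat x)) θhat) →
                (∫ x : 𝒳,
                  ((⨆ a : 𝒜, ip (φ (x, a)) θstar) - ip (φ (x, πhat x)) θstar) ∂ν) ≤ ε} := by
        intro ω hω
        have hω2 : ∀ k l : Fin d, (∑ j, g k l (ω j)) < (N : ℝ) * t ∧
            (∑ j, -(g k l (ω j))) < (N : ℝ) * t := by
          intro k l
          have hnot : ω ∉ U k l := fun hkl =>
            hω (by rw [hBadDef]; exact Set.mem_iUnion.mpr ⟨k, Set.mem_iUnion.mpr ⟨l, hkl⟩⟩)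
          rw [hUdef] at hnot
          simpa only [Set.mem_union, Set.mem_setOf_eq, not_or, not_le] using hnot
        simp only [Set.mem_setOf_eq]
        intro θhat hθhat hmin πhat hπm hπgr
        set Δ : Fin d → ℝ := fun i => θhat i - θstar i with hΔdef
        have hgram : ∀ k l, |(∑ j, φ (ω j) k * φ (ω j) l) - (N : ℝ) * m k l| ≤ (N : ℝ) * t := by
          intro k l
          obtain ⟨h1, h2⟩ := hω2 k l
          have hsum : ∑ j, g k l (ω j) = (∑ j, φ (ω j) k * φ (ω j) l) - (N : ℝ) * m k l := by
            rw [hgdef]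
            rw [Finset.sum_sub_distrib, Finset.sum_const, Finset.card_univ, Fintype.card_fin,
              nsmul_eq_mul]
          have hsum2 : ∑ j, -(g k l (ω j)) = -∑ j, g k l (ω j) := by
            rw [Finset.sum_neg_distrib]
          rw [← hsum]
          rw [hsum2] at h2
          rw [abs_le]
          constructor <;> linarith
        have hemp : ∑ j, (ip (φ (ω j)) Δ) ^ 2 = 0 := by
          have h1 := hmin θstar hθ1
          have h2 : ∑ j : Fin N, (ip (φ (ω j)) θstar - ip (φ (ω j)) θstar) ^ 2 = 0 := by
            simp
          rw [h2] at h1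
          have h3 : ∀ j : Fin N, ip (φ (ω j)) θhat - ip (φ (ω j)) θstar = ip (φ (ω j)) Δ := by
            intro j
            rw [hΔdef]
            exact ip_sub _ _ _
          simp_rw [h3] at h1
          exact le_antisymm h1 (Finset.sum_nonneg fun j _ => sq_nonneg _)
        have hE := gram_to_E hφjm hφjb hNpos ω m (fun k l => rfl) hgram Δ hemp
        have hΔ1 : l1norm Δ ≤ 2 * C := by
          rw [hΔdef]
          calc l1norm (fun i => θhat i - θstar i) ≤ l1norm θhat + l1norm θstar := l1_sub_le _ _
            _ ≤ 2 * C := by linarith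
        have hE2 : ∫ p, (ip (φ p) Δ) ^ 2 ∂μ ≤ ε ^ 2 / (4 * A) := by
          have hl1sq : (l1norm Δ) ^ 2 * t ≤ (2 * C) ^ 2 * t := by
            have h0 : 0 ≤ l1norm Δ := Finset.sum_nonneg fun i _ => abs_nonneg _
            have := pow_le_pow_left₀ h0 hΔ1 2
            exact mul_le_mul_of_nonneg_right this ht0.le
          have heq : (2 * C) ^ 2 * t = ε ^ 2 / (4 * A) := by
            rw [htdef]
            field_simp
            ring
          calc ∫ p, (ip (φ p) Δ) ^ 2 ∂μ ≤ (l1norm Δ) ^ 2 * t := hE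
            _ ≤ (2 * C) ^ 2 * t := hl1sq
            _ = ε ^ 2 / (4 * A) := heq
        exact subopt_of_E ν φ hφm hφb θstar θhat hε πhat hπgr hE2
      exact compl_bound hδ.le hBadMeas hsub
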